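/- Let p be a complex polynomial of degree d ≥ 2 with p(0) = 0 and |p'(0)| < 1, and let L be the sum of the absolute values of the coefficients of p. Define r = (1 − |p'(0)|)/(L − |p'(0)|) if L ≥ 1, and r = ((1 − |p'(0)|)/(L − |p'(0)|))^{1/(d−1)} (positive real (d−1)-th root) if L < 1. Then for every z ∈ ℂ with |z| < r, the iterates p^{∘n}(z) converge to 0 as n → ∞. -/

import Mathlib

open Polynomial Filter Topology

/-- For a polynomial `p` of degree `d ≥ 2` with `p(0) = 0` and `|p'(0)| < 1`, with `L` the sum
of the absolute values of the coefficients of `p` and `r` defined as in Lemma 5.1 of the paper,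
the disk `{z : |z| < r}` is contained in the attracting basin of the origin:
the iterates `p^[n](z)` converge to `0`. -/
theorem iterates_tendsto_zero_of_lt_radius
    (p : ℂ[X]) (d : ℕ) (hd : 2 ≤ d) (hdeg : p.natDegree = d)
    (h0 : p.eval 0 = 0) (hmul : ‖p.derivative.eval 0‖ < 1)
    (L : ℝ) (hL : L = ∑ i ∈ Finset.range (d + 1), ‖p.coeff i‖)
    (r : ℝ)
    (hr : r = if 1 ≤ L then
        (1 - ‖p.derivative.eval 0‖) / (L - ‖p.derivative.eval 0‖)
      else
        ((1 - ‖p.derivative.eval 0‖) / (L - ‖p.derivative.eval 0‖))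
          ^ ((1 : ℝ) / ((d : ℝ) - 1)))
    (z : ℂ) (hzr : ‖z‖ < r) :
    Tendsto (fun n => (fun w => p.eval w)^[n] z) atTop (𝓝 0) := by
  obtain ⟨e, rfl⟩ : ∃ e, d = e + 2 := ⟨d - 2, by omega⟩
  set f : ℕ → ℝ := fun i => ‖p.coeff i‖ with hf
  have hder : p.derivative.eval 0 = p.coeff 1 := by
    rw [← Polynomial.coeff_zero_eq_eval_zero, Polynomial.coeff_derivative]
    simp
  set A : ℝ := ‖p.derivative.eval 0‖ with hA
  have hAf : A = f 1 := by rw [hA, hder]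
  have hf0 : f 0 = 0 := by
    simp [hf, Polynomial.coeff_zero_eq_eval_zero, h0]
  have hpne : p ≠ 0 := by
    intro h; rw [h] at hdeg; simp at hdeg
  have hfd : 0 < f (e + 2) := by
    have h1 := Polynomial.leadingCoeff_ne_zero.mpr hpne
    rw [Polynomial.leadingCoeff, hdeg] at h1
    simpa [hf] using (norm_pos_iff.mpr h1)
  have hLsum : L = (∑ i ∈ Finset.range (e + 1), f (i + 2)) + f 1 := by
    rw [hL, Finset.sum_range_succ' _ (e + 2), Finset.sum_range_succ' _ (e + 1)]
    have h00 : ‖p.coeff 0‖ = 0 := by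
      rw [Polynomial.coeff_zero_eq_eval_zero, h0]; simp
    rw [h00]
    norm_num [hf]
  have hfnn : ∀ i, 0 ≤ f i := fun i => norm_nonneg _
  have hAL : A < L := by
    have h1 : f (e + 2) ≤ ∑ i ∈ Finset.range (e + 1), f (i + 2) := by
      have := Finset.single_le_sum (f := fun i => f (i + 2))
        (fun i _ => hfnn _) (Finset.self_mem_range_succ e)
      simpa using this
    rw [hLsum, hAf]; linarith
  have hA0 : 0 ≤ A := norm_nonneg _
  have hA1 : A < 1 := hmul
  have hLA : 0 < L - A := by linarith
  set t : ℝ := ‖z‖ with ht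
  have ht0 : 0 ≤ t := norm_nonneg _
  set M : ℝ := max t (t ^ (e + 1)) with hM
  have hM0 : 0 ≤ M := le_trans ht0 (le_max_left _ _)
  set c : ℝ := A + (L - A) * M with hc
  have hc0 : 0 ≤ c := add_nonneg hA0 (mul_nonneg hLA.le hM0)
  have hpowM : ∀ k, k ≤ e + 1 → 1 ≤ k → t ^ k ≤ M := by
    intro k hk1 hk2
    rcases le_total t 1 with h | h
    · refine le_trans ?_ (le_max_left _ _)
      calc t ^ k ≤ t ^ 1 := pow_le_pow_of_le_one ht0 h hk2
      _ = t := pow_one t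
    · exact le_trans (pow_le_pow_right₀ h hk1) (le_max_right _ _)
  have hkey : ∀ w : ℂ, ‖w‖ ≤ t → ‖p.eval w‖ ≤ c * ‖w‖ := by
    intro w hw
    set x : ℝ := ‖w‖ with hx
    have hx0 : 0 ≤ x := norm_nonneg _
    have heval : p.eval w = ∑ i ∈ Finset.range (e + 3), p.coeff i * w ^ i := by
      rw [show e + 3 = p.natDegree + 1 by omega]
      exact Polynomial.eval_eq_sum_range w
    have h1 : ‖p.eval w‖ ≤ ∑ i ∈ Finset.range (e + 3), f i * x ^ i := by
      rw [heval]
      refine le_trans (norm_sum_le _ _) (le_of_eq (Finset.sum_congr rfl fun i _ => ?_))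
      rw [norm_mul, norm_pow]
    have h2 : ∑ i ∈ Finset.range (e + 3), f i * x ^ i
        ≤ ∑ i ∈ Finset.range (e + 3),
            (f i * M * x + if i = 1 then f 1 * (1 - M) * x else 0) := by
      refine Finset.sum_le_sum fun i hi => ?_
      match i with
      | 0 => simp [hf0]
      | 1 => simp [pow_one]; ring_nf; exact le_refl _
      | (k + 2) =>
        simp only [if_neg (by omega : ¬ k + 2 = 1), add_zero]
        have hk : k + 1 ≤ e + 1 := by
          have := Finset.mem_range.mp hi; omega
        have hxx : x ^ (k + 2) ≤ M * x := by
          calc x ^ (k + 2) = x ^ (k + 1) * x := by ring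
          _ ≤ M * x := mul_le_mul_of_nonneg_right
              (le_trans (pow_le_pow_left₀ hx0 hw _) (hpowM _ hk (by omega))) hx0
        calc f (k + 2) * x ^ (k + 2) ≤ f (k + 2) * (M * x) :=
              mul_le_mul_of_nonneg_left hxx (hfnn _)
        _ = f (k + 2) * M * x := by ring
    have h3 : ∑ i ∈ Finset.range (e + 3),
          (f i * M * x + if i = 1 then f 1 * (1 - M) * x else 0) = c * x := by
      rw [Finset.sum_add_distrib, ← Finset.sum_mul, ← Finset.sum_mul, ← hL,
        Finset.sum_ite_eq' (Finset.range (e + 3)) 1 (fun _ => f 1 * (1 - M) * x),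
        if_pos (by simp : (1 : ℕ) ∈ Finset.range (e + 3)), hc, hAf]
      ring
    calc ‖p.eval w‖ ≤ _ := h1
    _ ≤ _ := h2
    _ = c * x := h3
  have hc1 : c < 1 := by
    rcases le_or_gt 1 L with hL1 | hL1
    · rw [hr, if_pos hL1] at hzr
      have hr1 : (1 - A) / (L - A) ≤ 1 := by
        rw [div_le_one hLA]; linarith
      have ht1 : t < 1 := lt_of_lt_of_le hzr hr1
      have hMt : M = t := by
        rw [hM, max_eq_left]
        calc t ^ (e + 1) ≤ t ^ 1 := pow_le_pow_of_le_one ht0 ht1.le (by omega)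
        _ = t := pow_one t
      rw [hc, hMt]
      have h1 : (L - A) * t < (L - A) * ((1 - A) / (L - A)) :=
        mul_lt_mul_of_pos_left hzr hLA
      rw [mul_div_cancel₀ _ (ne_of_gt hLA)] at h1
      linarith
    · rw [hr, if_neg (not_le.mpr hL1)] at hzr
      rcases le_or_gt t 1 with ht1 | ht1
      · have hM1 : M ≤ 1 := max_le ht1 (pow_le_one₀ ht0 ht1)
        have h1 : (L - A) * M ≤ (L - A) * 1 := mul_le_mul_of_nonneg_left hM1 hLA.le
        rw [hc]; nlinarith
      · have hMt : M = t ^ (e + 1) := by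
          rw [hM, max_eq_right]
          calc t = t ^ 1 := (pow_one t).symm
          _ ≤ t ^ (e + 1) := pow_le_pow_right₀ ht1.le (by omega)
        set Q : ℝ := (1 - A) / (L - A) with hQ
        have hQ0 : 0 < Q := div_pos (by linarith) hLA
        have hcast : ((e + 2 : ℕ) : ℝ) - 1 = ((e + 1 : ℕ) : ℝ) := by push_cast; ring
        rw [hcast] at hzr
        have hne : ((e + 1 : ℕ) : ℝ) ≠ 0 := by positivity
        have htQ : t ^ (e + 1) < Q := by
          have h1 : t ^ (e + 1) < (Q ^ ((1 : ℝ) / ((e + 1 : ℕ) : ℝ))) ^ (e + 1) :=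
            pow_lt_pow_left₀ hzr ht0 (by omega)
          have h2 : (Q ^ ((1 : ℝ) / ((e + 1 : ℕ) : ℝ))) ^ (e + 1) = Q := by
            rw [← Real.rpow_natCast (Q ^ ((1 : ℝ) / ((e + 1 : ℕ) : ℝ))) (e + 1),
              ← Real.rpow_mul hQ0.le, one_div_mul_cancel hne, Real.rpow_one]
          rwa [h2] at h1
        have h1 : (L - A) * t ^ (e + 1) < (L - A) * Q := mul_lt_mul_of_pos_left htQ hLA
        rw [hQ, mul_div_cancel₀ _ (ne_of_gt hLA)] at h1
        rw [hc, hMt]; linarith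
  have hiter : ∀ n, ‖(fun w => p.eval w)^[n] z‖ ≤ c ^ n * t := by
    intro n
    induction n with
    | zero => simp [ht]
    | succ n ih =>
      rw [Function.iterate_succ_apply']
      have hle : ‖(fun w => p.eval w)^[n] z‖ ≤ t := by
        refine le_trans ih ?_
        calc c ^ n * t ≤ 1 * t :=
          mul_le_mul_of_nonneg_right (pow_le_one₀ hc0 hc1.le) ht0
        _ = t := one_mul t
      calc ‖p.eval ((fun w => p.eval w)^[n] z)‖
          ≤ c * ‖(fun w => p.eval w)^[n] z‖ := hkey _ hle
      _ ≤ c * (c ^ n * t) := mul_le_mul_of_nonneg_left ih hc0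
      _ = c ^ (n + 1) * t := by ring
  have hlim : Tendsto (fun n => c ^ n * t) atTop (𝓝 0) := by
    have h1 := tendsto_pow_atTop_nhds_zero_of_lt_one hc0 hc1
    simpa using h1.mul_const t
  refine squeeze_zero_norm (fun n => ?_) hlim
  simpa using hiter n
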